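/- Let A ∈ B(E,F) have generalized inverse A⁺, with both rank A = k < ∞, and let T ∈ B(E,F) satisfy ‖T−A‖ < ‖A⁺‖⁻¹ and rank T = k. Then R(T) ∩ N(A⁺) = {0}. -/

import Mathlib

theorem stmt_8 {E F : Type*} [NormedAddCommGroup E] [NormedSpace ℝ E] [CompleteSpace E]
    [NormedAddCommGroup F] [NormedSpace ℝ F] [CompleteSpace F]
    (A T : E →L[ℝ] F) (Ap : F →L[ℝ] E) (k : ℕ)
    (h1 : A ∘L Ap ∘L A = A) (h2 : Ap ∘L A ∘L Ap = Ap)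
    (hAfin : FiniteDimensional ℝ (LinearMap.range (A : E →ₗ[ℝ] F)))
    (hTfin : FiniteDimensional ℝ (LinearMap.range (T : E →ₗ[ℝ] F)))
    (hrankA : Module.finrank ℝ (LinearMap.range (A : E →ₗ[ℝ] F)) = k)
    (hrankT : Module.finrank ℝ (LinearMap.range (T : E →ₗ[ℝ] F)) = k)
    (hT : ‖T - A‖ < ‖Ap‖⁻¹) :
    LinearMap.range (T : E →ₗ[ℝ] F) ⊓ LinearMap.ker (Ap : F →ₗ[ℝ] E) = ⊥ := by
  -- The perturbation has small norm
  have hsmall : ‖Ap ∘L (T - A)‖ < 1 := by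
    rcases eq_or_lt_of_le (norm_nonneg Ap) with h0 | h0
    · calc ‖Ap ∘L (T - A)‖ ≤ ‖Ap‖ * ‖T - A‖ := ContinuousLinearMap.opNorm_comp_le _ _
        _ = 0 := by rw [← h0]; ring
        _ < 1 := one_pos
    · calc ‖Ap ∘L (T - A)‖ ≤ ‖Ap‖ * ‖T - A‖ := ContinuousLinearMap.opNorm_comp_le _ _
        _ < ‖Ap‖ * ‖Ap‖⁻¹ := by exact mul_lt_mul_of_pos_left hT h0
        _ = 1 := mul_inv_cancel₀ (ne_of_gt h0)
  -- The unit C = 1 + Ap ∘ (T - A)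
  have hneg : ‖-(Ap ∘L (T - A))‖ < 1 := by rwa [norm_neg]
  set u : (E →L[ℝ] E)ˣ := Units.oneSub _ hneg with hu
  have huval : (u : E →L[ℝ] E) = 1 + Ap ∘L (T - A) := by
    simp only [hu, Units.oneSub]
    abel
  have husurj : Function.Surjective (u : E →L[ℝ] E) := by
    intro y
    refine ⟨((u⁻¹ : (E →L[ℝ] E)ˣ) : E →L[ℝ] E) y, ?_⟩
    have h : ((u : E →L[ℝ] E) * ((u⁻¹ : (E →L[ℝ] E)ˣ) : E →L[ℝ] E)) y = (1 : E →L[ℝ] E) y := by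
      rw [u.mul_inv]
    rw [ContinuousLinearMap.mul_apply, ContinuousLinearMap.one_apply] at h
    exact h
  -- key identity : Ap ∘L T = (Ap ∘L A) ∘L u
  have hApAAp : ∀ z, Ap (A (Ap z)) = Ap z := by
    intro z
    have := congrFun (congrArg DFunLike.coe h2) z
    simpa using this
  have hkey : ∀ x, Ap (T x) = (Ap ∘L A) ((u : E →L[ℝ] E) x) := by
    intro x
    rw [huval]
    simp only [ContinuousLinearMap.add_apply, ContinuousLinearMap.coe_comp',
      Function.comp_apply, ContinuousLinearMap.one_apply, ContinuousLinearMap.sub_apply,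
      map_add]
    rw [hApAAp]
    simp
  -- ranges
  have hrange : LinearMap.range ((Ap ∘L T : E →L[ℝ] E) : E →ₗ[ℝ] E) = LinearMap.range ((Ap ∘L A : E →L[ℝ] E) : E →ₗ[ℝ] E) := by
    ext y
    simp only [LinearMap.mem_range, ContinuousLinearMap.coe_comp', Function.comp_apply]
    constructor
    · rintro ⟨x, rfl⟩
      exact ⟨(u : E →L[ℝ] E) x, (hkey x).symm⟩
    · rintro ⟨x, rfl⟩
      obtain ⟨x', hx'⟩ := husurj x
      exact ⟨x', by show Ap (T x') = (Ap ∘L A) x; rw [hkey x', hx']⟩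
  have hmapT : Submodule.map (Ap : F →ₗ[ℝ] E) (LinearMap.range (T : E →ₗ[ℝ] F)) = LinearMap.range ((Ap ∘L T : E →L[ℝ] E) : E →ₗ[ℝ] E) := by
    ext y
    simp only [Submodule.mem_map, LinearMap.mem_range, ContinuousLinearMap.coe_comp',
      Function.comp_apply]
    constructor
    · rintro ⟨z, ⟨x, rfl⟩, rfl⟩; exact ⟨x, rfl⟩
    · rintro ⟨x, rfl⟩; exact ⟨T x, ⟨x, rfl⟩, rfl⟩
  have hmapA : Submodule.map (Ap : F →ₗ[ℝ] E) (LinearMap.range (A : E →ₗ[ℝ] F)) = LinearMap.range ((Ap ∘L A : E →L[ℝ] E) : E →ₗ[ℝ] E) := by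
    ext y
    simp only [Submodule.mem_map, LinearMap.mem_range, ContinuousLinearMap.coe_comp',
      Function.comp_apply]
    constructor
    · rintro ⟨z, ⟨x, rfl⟩, rfl⟩; exact ⟨x, rfl⟩
    · rintro ⟨x, rfl⟩; exact ⟨A x, ⟨x, rfl⟩, rfl⟩
  -- finrank of range (Ap ∘L A) is k
  haveI : FiniteDimensional ℝ (Submodule.map (Ap : F →ₗ[ℝ] E) (LinearMap.range (A : E →ₗ[ℝ] F))) :=
    Module.Finite.map _ _
  haveI : FiniteDimensional ℝ (LinearMap.range ((Ap ∘L A : E →L[ℝ] E) : E →ₗ[ℝ] E)) := by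
    rw [← hmapA]; infer_instance
  have hle1 : Module.finrank ℝ (LinearMap.range ((Ap ∘L A : E →L[ℝ] E) : E →ₗ[ℝ] E)) ≤ k := by
    rw [← hmapA, ← hrankA]
    exact Submodule.finrank_map_le _ _
  have hmapAA : Submodule.map (A : E →ₗ[ℝ] F) (LinearMap.range ((Ap ∘L A : E →L[ℝ] E) : E →ₗ[ℝ] E)) = LinearMap.range (A : E →ₗ[ℝ] F) := by
    ext y
    simp only [Submodule.mem_map, LinearMap.mem_range, ContinuousLinearMap.coe_comp',
      Function.comp_apply]
    constructor
    · rintro ⟨z, ⟨x, rfl⟩, rfl⟩; exact ⟨Ap (A x), rfl⟩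
    · rintro ⟨x, rfl⟩
      refine ⟨Ap (A x), ⟨x, rfl⟩, ?_⟩
      have := congrFun (congrArg DFunLike.coe h1) x
      simpa using this
  have hge1 : k ≤ Module.finrank ℝ (LinearMap.range ((Ap ∘L A : E →L[ℝ] E) : E →ₗ[ℝ] E)) := by
    calc k = Module.finrank ℝ (LinearMap.range (A : E →ₗ[ℝ] F)) := hrankA.symm
      _ = Module.finrank ℝ (Submodule.map (A : E →ₗ[ℝ] F) (LinearMap.range ((Ap ∘L A : E →L[ℝ] E) : E →ₗ[ℝ] E))) := by rw [hmapAA]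
      _ ≤ Module.finrank ℝ (LinearMap.range ((Ap ∘L A : E →L[ℝ] E) : E →ₗ[ℝ] E)) := Submodule.finrank_map_le _ _
  have hrankApA : Module.finrank ℝ (LinearMap.range ((Ap ∘L A : E →L[ℝ] E) : E →ₗ[ℝ] E)) = k := le_antisymm hle1 hge1
  -- finrank of Ap image of range T is k
  have hrankmapT : Module.finrank ℝ (Submodule.map (Ap : F →ₗ[ℝ] E) (LinearMap.range (T : E →ₗ[ℝ] F))) = k := by
    rw [hmapT, hrange, hrankApA]
  -- dimension count on the restriction of Ap to range T
  set S := LinearMap.range (T : E →ₗ[ℝ] F) with hS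
  set g : S →ₗ[ℝ] E := (Ap : F →ₗ[ℝ] E).comp S.subtype with hg
  have hrangeg : LinearMap.range g = Submodule.map (Ap : F →ₗ[ℝ] E) S := by
    rw [hg, LinearMap.range_comp, Submodule.range_subtype]
  haveI : FiniteDimensional ℝ S := hTfin
  have hcount := LinearMap.finrank_range_add_finrank_ker g
  rw [hrangeg] at hcount
  have hSk : Module.finrank ℝ S = k := hrankT
  have hkerg : Module.finrank ℝ (LinearMap.ker g) = 0 := by
    omega
  have hkergbot : LinearMap.ker g = ⊥ := Submodule.finrank_eq_zero.mp hkerg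
  -- conclude
  rw [eq_bot_iff]
  rintro y ⟨hyT, hyK⟩
  have : (⟨y, hyT⟩ : S) ∈ LinearMap.ker g := by
    simp only [LinearMap.mem_ker, hg, LinearMap.comp_apply, Submodule.subtype_apply]
    simpa using hyK
  rw [hkergbot, Submodule.mem_bot] at this
  have : y = 0 := congrArg Subtype.val this
  simp [this]
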